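/- Let k, n ≥ 1, let ρ be a nonzero linear form in R = 𝔽₂[t₁,…,t_k], let n_ρ ≥ 1, and let (A_p)_{p∈V} be a ρ-cellular family of valence n_ρ consisting of n-element multisets. If the family is ρ-divisible, then for all integers l, u ≥ 1 one has ρ^{n_ρ} divides Σ_{p∈V} σ_u(A_p^{(l)}) in R, where A_p^{(l)} denotes the multiset of l-th powers of the entries of A_p. -/

import Mathlib

open MvPolynomial

noncomputable section

/-- The polynomial ring `R = 𝔽₂[t₁,…,t_k]`. -/
abbrev Rk (k : ℕ) : Type := MvPolynomial (Fin k) (ZMod 2)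

/-- The field of fractions `K` of `R`. -/
abbrev Kk (k : ℕ) : Type := FractionRing (Rk k)

/-- The canonical map `R → K`. -/
def toK (k : ℕ) : Rk k →+* Kk k := algebraMap _ _

/-- Two `n`-element multisets (presented as tuples) are congruent mod `ρ` if there
is a multiplicity-preserving bijection matching elements that differ by a
multiple of `ρ`. -/
def CongMod {k n : ℕ} (ρ : Rk k) (A B : Fin n → Rk k) : Prop :=
  ∃ π : Equiv.Perm (Fin n), ∀ i, ρ ∣ A i - B (π i)

/-- Multiplicity of `ξ` in the tuple `A` (viewed as a multiset). -/
def cnt {k n : ℕ} (ξ : Rk k) (A : Fin n → Rk k) : ℕ :=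
  Nat.card {i : Fin n // A i = ξ}

open scoped Classical in
/-- `Ifun S A` is the number of occurrences `I_A(S)` of the multiset `S` as a
submultiset of (the multiset of entries of) `A`, counted with multiplicity:
`∏_ξ C(multiplicity of ξ in A, multiplicity of ξ in S)`. -/
def Ifun {k n : ℕ} (S : Multiset (Rk k)) (A : Fin n → Rk k) : ℕ :=
  ∏ ξ ∈ S.toFinset, Nat.choose (cnt ξ A) (S.count ξ)

/-- `esig n r x` is the `r`-th elementary symmetric polynomial of the entries of
the tuple `x`. -/
def esig {k : ℕ} (n r : ℕ) (x : Fin n → Rk k) : Rk k :=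
  ∑ t ∈ Finset.powersetCard r Finset.univ, ∏ i ∈ t, x i

/-- A `ρ`-cellular family of valence `nρ`: a finite family, indexed by a finite
set `V` of even cardinality, of `n`-element multisets of nonzero linear forms,
each containing `ρ` with multiplicity exactly `nρ`, all congruent mod `ρ`. -/
def Cellular {k n : ℕ} (ρ : Rk k) (nρ : ℕ) {V : Type} [Fintype V]
    (A : V → Fin n → Rk k) : Prop :=
  Even (Fintype.card V) ∧
  (∀ p i, A p i ≠ 0 ∧ (A p i).IsHomogeneous 1) ∧
  (∀ p, cnt ρ (A p) = nρ) ∧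
  (∀ p q, CongMod ρ (A p) (A q))

/-- Property (P): for every multiset `S` of nonzero linear forms of cardinality
at most `nρ - 1` (including `S = ∅`), `∑_{p ∈ V} I_p(S)` is even. -/
def PropP {k n : ℕ} (nρ : ℕ) {V : Type} [Fintype V]
    (A : V → Fin n → Rk k) : Prop :=
  ∀ S : Multiset (Rk k), (∀ ξ ∈ S, ξ ≠ 0 ∧ ξ.IsHomogeneous 1) → S.card ≤ nρ - 1 →
    Even (∑ p : V, Ifun S (A p))

/-- A finite family `(A_p)_{p ∈ V}` of `n`-element multisets is `ρ`-divisible if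
for every symmetric polynomial `f` over `𝔽₂` in `n` variables there are
`h, g ∈ R` with `ρ ∤ g` such that `∑_{p ∈ V} f(A_p)/σₙ(A_p) = h/g` in `K`. -/
def RhoDivisible {k n : ℕ} (ρ : Rk k) {V : Type} [Fintype V]
    (A : V → Fin n → Rk k) : Prop :=
  ∀ f : MvPolynomial (Fin n) (ZMod 2), f.IsSymmetric →
    ∃ h g : Rk k, ¬ ρ ∣ g ∧
      ∑ p : V, toK k (aeval (A p) f) / toK k (∏ i, A p i) = toK k h / toK k g

-- ===================== auxiliary lemmas =====================

section GenPoly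

variable {A : Type*} [CommRing A]

theorem coeff_prod_one_add {ι : Type*} [DecidableEq ι] (x : ι → A) (s : Finset ι) (r : ℕ) :
    (∏ i ∈ s, (1 + Polynomial.C (x i) * Polynomial.X)).coeff r
      = ∑ T ∈ Finset.powersetCard r s, ∏ i ∈ T, x i := by
  induction s using Finset.induction_on generalizing r with
  | empty =>
    cases r with
    | zero => simp [Finset.powersetCard_zero]
    | succ r =>
      rw [Finset.prod_empty, Finset.powersetCard_eq_empty.2 (by simp), Finset.sum_empty,
        Polynomial.coeff_one]
      simp
  | @insert a s ha ih =>
    rw [Finset.prod_insert ha, add_mul, one_mul, mul_assoc, Polynomial.coeff_add,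
      Polynomial.coeff_C_mul]
    cases r with
    | zero =>
      rw [Polynomial.mul_coeff_zero, Polynomial.coeff_X_zero, zero_mul, mul_zero, add_zero,
        ih 0]
      simp
    | succ r =>
      have hd : Disjoint (s.powersetCard (r + 1)) ((s.powersetCard r).image (insert a)) := by
        rw [Finset.disjoint_left]
        intro T hT hT2
        obtain ⟨T', hT', rfl⟩ := Finset.mem_image.1 hT2
        exact ha ((Finset.mem_powersetCard.1 hT).1 (Finset.mem_insert_self a T'))
      rw [Polynomial.coeff_X_mul, Finset.powersetCard_succ_insert ha, Finset.sum_union hd,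
        ih (r + 1), ih r, Finset.sum_image ?hinj]
      case hinj =>
        intro T hT T' hT' hEq
        have haT : a ∉ T := fun hmem => ha ((Finset.mem_powersetCard.1 hT).1 hmem)
        have haT' : a ∉ T' := fun hmem => ha ((Finset.mem_powersetCard.1 hT').1 hmem)
        rw [← Finset.erase_insert haT, ← Finset.erase_insert haT', hEq]
      rw [Finset.mul_sum]
      congr 1
      refine Finset.sum_congr rfl fun T hT => ?_
      have haT : a ∉ T := fun hmem => ha ((Finset.mem_powersetCard.1 hT).1 hmem)
      rw [Finset.prod_insert haT]

theorem coeff_one_add_pow (a : A) (W r : ℕ) :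
    ((1 + Polynomial.C a * Polynomial.X) ^ W).coeff r = (W.choose r : A) * a ^ r := by
  have h : (1 + Polynomial.C a * Polynomial.X) ^ W
      = ∏ _i ∈ Finset.range W, (1 + Polynomial.C a * Polynomial.X) := by
    rw [Finset.prod_const, Finset.card_range]
  rw [h, coeff_prod_one_add (fun _ => a)]
  rw [Finset.sum_congr rfl (fun T hT => by
    rw [Finset.prod_const, (Finset.mem_powersetCard.1 hT).2])]
  rw [Finset.sum_const, Finset.card_powersetCard, Finset.card_range, nsmul_eq_mul]

theorem add_pow_two_pow_char2 {B : Type*} [CommRing B] (h2 : (2 : B) = 0) (u v : B) (s : ℕ) :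
    (u + v) ^ 2 ^ s = u ^ 2 ^ s + v ^ 2 ^ s := by
  induction s with
  | zero => simp
  | succ s ih =>
    have hsq : ∀ x y : B, (x + y) ^ 2 = x ^ 2 + y ^ 2 := by
      intro x y
      have : (x + y) ^ 2 = x ^ 2 + y ^ 2 + 2 * (x * y) := by ring
      rw [this, h2, zero_mul, add_zero]
    rw [pow_succ, pow_mul, pow_mul, pow_mul, ih, hsq]

end GenPoly

theorem two_eq_zero_Rk (k : ℕ) : (2 : Rk k) = 0 := by
  have h : (2 : Rk k) = MvPolynomial.C (2 : ZMod 2) := by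
    rw [show (2 : ZMod 2) = 1 + 1 by decide, map_add, map_one]
    norm_num
  rw [h, show (2 : ZMod 2) = 0 by decide, map_zero]

theorem two_eq_zero_PRk (k : ℕ) : (2 : Polynomial (Rk k)) = 0 := by
  have h : (2 : Polynomial (Rk k)) = Polynomial.C (2 : Rk k) := by
    rw [show (2 : Rk k) = 1 + 1 by rw [one_add_one_eq_two], map_add, map_one]
    norm_num
  rw [h, two_eq_zero_Rk, map_zero]

theorem key_identity {k n : ℕ} (ρ : Rk k) (x : Fin n → Rk k) (S : Finset (Fin n))
    (hS : ∀ i ∈ S, x i = ρ) (N : ℕ) (hcard : S.card = N) (s : ℕ) (hsN : N ≤ 2 ^ s)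
    (hsm : n - N < 2 ^ s) :
    ∑ tp ∈ Finset.HasAntidiagonal.antidiagonal (n - N),
        ((2 ^ s - N).choose tp.1 : Rk k) * ρ ^ tp.1 * esig n tp.2 x
      = ∏ i ∈ Sᶜ, x i := by
  classical
  set G : Polynomial (Rk k) := ∏ i ∈ Sᶜ, (1 + Polynomial.C (x i) * Polynomial.X) with hG
  set P : Polynomial (Rk k) := ∏ i ∈ (Finset.univ : Finset (Fin n)),
      (1 + Polynomial.C (x i) * Polynomial.X) with hP
  have hsplit : P = (1 + Polynomial.C ρ * Polynomial.X) ^ N * G := by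
    rw [hP, ← Finset.prod_mul_prod_compl S]
    congr 1
    rw [← hcard, ← Finset.prod_const]
    exact Finset.prod_congr rfl fun i hi => by rw [hS i hi]
  have hkey : (1 + Polynomial.C ρ * Polynomial.X) ^ (2 ^ s - N) * P
      = G + (Polynomial.C (ρ ^ 2 ^ s) * G) * Polynomial.X ^ 2 ^ s := by
    rw [hsplit, ← mul_assoc, ← pow_add, Nat.sub_add_cancel hsN,
      add_pow_two_pow_char2 (two_eq_zero_PRk k) 1 (Polynomial.C ρ * Polynomial.X) s,
      one_pow, mul_pow, ← map_pow]
    ring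
  have hL := congrArg (fun q : Polynomial (Rk k) => q.coeff (n - N)) hkey
  rw [Polynomial.coeff_add, Polynomial.coeff_mul_X_pow', if_neg (not_le.2 hsm), add_zero,
    Polynomial.coeff_mul] at hL
  have hcompl_card : Sᶜ.card = n - N := by
    rw [Finset.card_compl, hcard, Fintype.card_fin]
  have hGcoeff : G.coeff (n - N) = ∏ i ∈ Sᶜ, x i := by
    rw [hG, coeff_prod_one_add, ← hcompl_card, Finset.powersetCard_self, Finset.sum_singleton]
  rw [hGcoeff] at hL
  rw [← hL]
  refine Finset.sum_congr rfl fun tp _ => ?_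
  rw [coeff_one_add_pow]
  congr 1
  rw [hP, coeff_prod_one_add]
  rfl

theorem dvd_sum_mul_of_div_eq {k : ℕ} (ρ : Rk k) (hρ : Prime ρ) {V : Type} [Fintype V] [DecidableEq V]
    (N : ℕ) (x B : V → Rk k) (hB0 : ∀ p, B p ≠ 0)
    (h g : Rk k) (hg : ¬ ρ ∣ g)
    (heq : ∑ p : V, toK k (x p) / toK k (ρ ^ N * B p) = toK k h / toK k g) :
    ρ ^ N ∣ ∑ p : V, x p * ∏ q ∈ Finset.univ.erase p, B q := by
  classical
  have hinj : Function.Injective (toK k) := IsFractionRing.injective (Rk k) (Kk k)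
  have hg0 : g ≠ 0 := fun h0 => hg (h0 ▸ dvd_zero ρ)
  have hρ0 : ρ ≠ 0 := hρ.ne_zero
  set Bt : Rk k := ∏ q : V, B q with hBt
  have hBt0 : Bt ≠ 0 := Finset.prod_ne_zero_iff.2 fun q _ => hB0 q
  have hD0 : ρ ^ N * Bt ≠ 0 := mul_ne_zero (pow_ne_zero _ hρ0) hBt0
  have hKD0 : toK k (ρ ^ N * Bt) ≠ 0 := fun hc => hD0 (hinj (by rw [hc, map_zero]))
  have hKg0 : toK k g ≠ 0 := fun hc => hg0 (hinj (by rw [hc, map_zero]))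
  have hstep : ∀ p : V, toK k (x p) / toK k (ρ ^ N * B p)
      = toK k (x p * ∏ q ∈ Finset.univ.erase p, B q) / toK k (ρ ^ N * Bt) := by
    intro p
    have hyB0 : toK k (ρ ^ N * B p) ≠ 0 := fun hc =>
      (mul_ne_zero (pow_ne_zero _ hρ0) (hB0 p)) (hinj (by rw [hc, map_zero]))
    rw [div_eq_div_iff hyB0 hKD0, ← map_mul, ← map_mul]
    congr 1
    have hBp : B p * ∏ q ∈ Finset.univ.erase p, B q = ∏ q : V, B q :=
      Finset.mul_prod_erase Finset.univ B (Finset.mem_univ p)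
    rw [hBt, ← hBp]
    ring
  rw [Finset.sum_congr rfl (fun p _ => hstep p), ← Finset.sum_div, ← map_sum,
    div_eq_div_iff hKD0 hKg0, ← map_mul, ← map_mul] at heq
  have heqR := hinj heq
  have hdvd : ρ ^ N ∣ (∑ p : V, x p * ∏ q ∈ Finset.univ.erase p, B q) * g := by
    rw [heqR]
    exact ⟨h * Bt, by ring⟩
  exact hρ.pow_dvd_of_dvd_mul_right N hg hdvd

theorem single_of_degree_one {k : ℕ} (w : Fin k →₀ ℕ) (hw : Finsupp.degree w = 1) :
    ∃ j, w = Finsupp.single j 1 := by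
  classical
  have hne : w.support.Nonempty := by
    rcases Finset.eq_empty_or_nonempty w.support with hE | hE
    · exfalso
      rw [Finsupp.degree_apply, hE, Finset.sum_empty] at hw
      exact one_ne_zero hw.symm
    · exact hE
  obtain ⟨j, hj⟩ := hne
  have hj1 : w j ≤ 1 := by
    rw [← hw]
    exact Finset.single_le_sum (fun i _ => Nat.zero_le _) hj
  have hj1' : 1 ≤ w j := Nat.one_le_iff_ne_zero.2 (Finsupp.mem_support_iff.1 hj)
  have hwj : w j = 1 := le_antisymm hj1 hj1'
  have hrest : ∑ i ∈ w.support.erase j, w i = 0 := by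
    have := Finset.sum_erase_add w.support w hj
    rw [Finsupp.degree_apply] at hw
    omega
  refine ⟨j, ?_⟩
  ext i
  by_cases hij : i = j
  · rw [hij, hwj, Finsupp.single_eq_same]
  · rw [Finsupp.single_eq_of_ne' (fun hc => hij hc.symm)]
    by_cases hmem : i ∈ w.support
    · have : w i = 0 :=
        (Finset.sum_eq_zero_iff.1 hrest) i (Finset.mem_erase.2 ⟨hij, hmem⟩)
      exact this
    · exact Finsupp.notMem_support_iff.1 hmem

theorem degree_one_rep {k : ℕ} (u : Rk k) (hu : u.IsHomogeneous 1) :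
    u = ∑ i, MvPolynomial.C (MvPolynomial.coeff (Finsupp.single i 1) u) * MvPolynomial.X i := by
  apply MvPolynomial.ext
  intro w
  rw [MvPolynomial.coeff_sum]
  by_cases hw : ∃ j, w = Finsupp.single j 1
  · obtain ⟨j, rfl⟩ := hw
    rw [Finset.sum_eq_single j (fun i _ hij => ?_) (fun hj => absurd (Finset.mem_univ j) hj)]
    · rw [MvPolynomial.coeff_C_mul, MvPolynomial.coeff_X', if_pos rfl, mul_one]
    · rw [MvPolynomial.coeff_C_mul, MvPolynomial.coeff_X', if_neg, mul_zero]
      intro hc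
      exact hij (by
        have := (Finsupp.single_left_inj (one_ne_zero)).1 hc
        exact this)
  · have hw1 : Finsupp.degree w ≠ 1 := fun hdeg => hw ((single_of_degree_one w hdeg))
    rw [hu.coeff_eq_zero hw1]
    symm
    apply Finset.sum_eq_zero
    intro i _
    rw [MvPolynomial.coeff_C_mul, MvPolynomial.coeff_X', if_neg, mul_zero]
    exact fun hc => hw ⟨i, hc.symm⟩

theorem coeff_linear_sum {k : ℕ} (s : Finset (Fin k)) (a : Fin k → ZMod 2) (j : Fin k) :
    MvPolynomial.coeff (Finsupp.single j 1)
        (∑ i ∈ s, MvPolynomial.C (a i) * MvPolynomial.X i)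
      = if j ∈ s then a j else 0 := by
  rw [MvPolynomial.coeff_sum]
  by_cases hj : j ∈ s
  · rw [if_pos hj, Finset.sum_eq_single j (fun i _ hij => ?_) (fun hc => absurd hj hc)]
    · rw [MvPolynomial.coeff_C_mul, MvPolynomial.coeff_X', if_pos rfl, mul_one]
    · rw [MvPolynomial.coeff_C_mul, MvPolynomial.coeff_X', if_neg, mul_zero]
      exact fun hc => hij ((Finsupp.single_left_inj (one_ne_zero)).1 hc)
  · rw [if_neg hj]
    apply Finset.sum_eq_zero
    intro i hi
    rw [MvPolynomial.coeff_C_mul, MvPolynomial.coeff_X', if_neg, mul_zero]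
    exact fun hc => hj (((Finsupp.single_left_inj (one_ne_zero)).1 hc) ▸ hi)
theorem prime_X_mv {k : ℕ} (i : Fin k) : Prime (MvPolynomial.X i : Rk k) := by
  classical
  cases k with
  | zero => exact i.elim0
  | succ k' =>
    have h0 : Prime (MvPolynomial.X 0 : Rk (k' + 1)) := by
      have hiff := MulEquiv.prime_iff (MvPolynomial.finSuccEquiv (ZMod 2) k').toRingEquiv.toMulEquiv
        (p := (MvPolynomial.X 0 : Rk (k' + 1)))
      refine hiff.1 ?_
      have hmap : (MvPolynomial.finSuccEquiv (ZMod 2) k').toRingEquiv.toMulEquiv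
          (MvPolynomial.X 0 : Rk (k' + 1)) = Polynomial.X :=
        MvPolynomial.finSuccEquiv_X_zero
      rw [hmap]
      exact Polynomial.prime_X
    have hiff2 := MulEquiv.prime_iff (MvPolynomial.renameEquiv (ZMod 2)
        (Equiv.swap (0 : Fin (k' + 1)) i)).toRingEquiv.toMulEquiv
      (p := (MvPolynomial.X 0 : Rk (k' + 1)))
    have hmap2 : (MvPolynomial.renameEquiv (ZMod 2)
        (Equiv.swap (0 : Fin (k' + 1)) i)).toRingEquiv.toMulEquiv
          (MvPolynomial.X 0 : Rk (k' + 1)) = MvPolynomial.X i := by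
      show MvPolynomial.rename (⇑(Equiv.swap (0 : Fin (k' + 1)) i)) (MvPolynomial.X 0)
        = MvPolynomial.X i
      rw [MvPolynomial.rename_X, Equiv.swap_apply_left]
    rw [hmap2] at hiff2
    exact hiff2.2 h0

theorem prime_and_dvd_eq {k : ℕ} (ρ : Rk k) (hρ0 : ρ ≠ 0) (hρ1 : ρ.IsHomogeneous 1) :
    Prime ρ ∧ ∀ u : Rk k, u.IsHomogeneous 1 → u ≠ 0 → ρ ∣ u → u = ρ := by
  classical
  have hrep := degree_one_rep ρ hρ1
  have hex : ∃ i₀, MvPolynomial.coeff (Finsupp.single i₀ 1) ρ ≠ 0 := by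
    by_contra hno
    push_neg at hno
    apply hρ0
    rw [hrep]
    apply Finset.sum_eq_zero
    intro i _
    rw [hno i, map_zero, zero_mul]
  obtain ⟨i₀, hi₀⟩ := hex
  have hzmod : ∀ a : ZMod 2, a ≠ 0 → a = 1 := by decide
  have hc1 : MvPolynomial.coeff (Finsupp.single i₀ 1) ρ = 1 := hzmod _ hi₀
  set sub : Fin k → Rk k := Function.update MvPolynomial.X i₀ ρ with hsub
  set φ : Rk k →ₐ[ZMod 2] Rk k := MvPolynomial.aeval sub with hφ
  have hφX : ∀ j, j ≠ i₀ → φ (MvPolynomial.X j) = MvPolynomial.X j := by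
    intro j hj
    rw [hφ, MvPolynomial.aeval_X, hsub, Function.update_of_ne hj]
  have hφX0 : φ (MvPolynomial.X i₀) = ρ := by
    rw [hφ, MvPolynomial.aeval_X, hsub, Function.update_self]
  have hφC : ∀ r : ZMod 2, φ (MvPolynomial.C r) = MvPolynomial.C r := by
    intro r
    rw [hφ, MvPolynomial.aeval_C, MvPolynomial.algebraMap_eq]
  have hφlin : ∀ u : Rk k, u.IsHomogeneous 1 →
      φ u = (∑ i ∈ Finset.univ.erase i₀,
          MvPolynomial.C (MvPolynomial.coeff (Finsupp.single i 1) u) * MvPolynomial.X i)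
        + MvPolynomial.C (MvPolynomial.coeff (Finsupp.single i₀ 1) u) * ρ := by
    intro u hu
    conv_lhs => rw [degree_one_rep u hu]
    rw [map_sum, ← Finset.sum_erase_add _ _ (Finset.mem_univ i₀)]
    congr 1
    · refine Finset.sum_congr rfl fun i hi => ?_
      rw [map_mul, hφC, hφX i (Finset.mem_erase.1 hi).1]
    · rw [map_mul, hφC, hφX0]
  have h2 : ∀ a : Rk k, a + a = 0 := by
    intro a
    rw [← two_mul, two_eq_zero_Rk, zero_mul]
  have hcancel : ∀ a b : Rk k, a + b = 0 → a = b := by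
    intro a b hab
    calc a = a + (b + b) := by rw [h2 b, add_zero]
    _ = (a + b) + b := by ring
    _ = b := by rw [hab, zero_add]
  have hρdecomp : ρ = (∑ i ∈ Finset.univ.erase i₀,
      MvPolynomial.C (MvPolynomial.coeff (Finsupp.single i 1) ρ) * MvPolynomial.X i)
        + MvPolynomial.X i₀ := by
    conv_lhs => rw [hrep]
    rw [← Finset.sum_erase_add _ _ (Finset.mem_univ i₀), hc1, map_one, one_mul]
  have hφρ : φ ρ = MvPolynomial.X i₀ := by
    apply hcancel
    rw [hφlin ρ hρ1, hc1, map_one, one_mul]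
    calc (∑ i ∈ Finset.univ.erase i₀,
          MvPolynomial.C (MvPolynomial.coeff (Finsupp.single i 1) ρ) * MvPolynomial.X i)
        + ρ + MvPolynomial.X i₀
        = ((∑ i ∈ Finset.univ.erase i₀,
            MvPolynomial.C (MvPolynomial.coeff (Finsupp.single i 1) ρ) * MvPolynomial.X i)
          + MvPolynomial.X i₀) + ρ := by ring
    _ = ρ + ρ := by rw [← hρdecomp]
    _ = 0 := h2 ρ
  have hcomp : φ.comp φ = AlgHom.id (ZMod 2) (Rk k) := by
    apply MvPolynomial.algHom_ext
    intro j
    by_cases hj : j = i₀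
    · subst hj
      rw [AlgHom.comp_apply, hφX0, hφρ, AlgHom.id_apply]
    · rw [AlgHom.comp_apply, hφX j hj, hφX j hj, AlgHom.id_apply]
  set e : Rk k ≃ₐ[ZMod 2] Rk k := AlgEquiv.ofAlgHom φ φ hcomp hcomp with he
  have hPρ : Prime ρ := by
    have hiff := MulEquiv.prime_iff e.toRingEquiv.toMulEquiv (p := (MvPolynomial.X i₀ : Rk k))
    have hmap : e.toRingEquiv.toMulEquiv (MvPolynomial.X i₀ : Rk k) = ρ := hφX0
    rw [hmap] at hiff
    exact hiff.2 (prime_X_mv i₀)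
  refine ⟨hPρ, ?_⟩
  intro u hu hu0 hdvd
  have hdvd' : MvPolynomial.X i₀ ∣ φ u := by
    have hmapdvd := map_dvd φ hdvd
    rwa [hφρ] at hmapdvd
  obtain ⟨q, hq⟩ := hdvd'
  have hcoeffzero : ∀ j, j ≠ i₀ → MvPolynomial.coeff (Finsupp.single j 1) (φ u) = 0 := by
    intro j hj
    rw [hq, MvPolynomial.coeff_X_mul', if_neg]
    intro hmem
    have hval := Finsupp.mem_support_iff.1 hmem
    rw [Finsupp.single_apply, if_neg hj] at hval
    exact hval rfl
  have hco : ∀ j, j ≠ i₀ →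
      MvPolynomial.coeff (Finsupp.single j 1) u
        + MvPolynomial.coeff (Finsupp.single i₀ 1) u
            * MvPolynomial.coeff (Finsupp.single j 1) ρ = 0 := by
    intro j hj
    have hz := hcoeffzero j hj
    rw [hφlin u hu, MvPolynomial.coeff_add, MvPolynomial.coeff_C_mul, coeff_linear_sum,
      if_pos (Finset.mem_erase.2 ⟨hj, Finset.mem_univ j⟩)] at hz
    exact hz
  have hsolve : ∀ a b : ZMod 2, a + b = 0 → a = b := by decide
  have hzo : ∀ a : ZMod 2, a = 0 ∨ a = 1 := by decide
  rcases hzo (MvPolynomial.coeff (Finsupp.single i₀ 1) u) with h0 | h1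
  · exfalso
    apply hu0
    rw [degree_one_rep u hu]
    apply Finset.sum_eq_zero
    intro i _
    by_cases hi : i = i₀
    · rw [hi, h0, map_zero, zero_mul]
    · rw [hsolve _ _ (hco i hi), h0, zero_mul, map_zero, zero_mul]
  · rw [degree_one_rep u hu, degree_one_rep ρ hρ1]
    refine Finset.sum_congr rfl fun i _ => ?_
    by_cases hi : i = i₀
    · rw [hi, h1, hc1]
    · rw [hsolve _ _ (hco i hi), h1, one_mul]


/-- if a `ρ`-cellular family of valence `nρ ≥ 1` is `ρ`-divisible,
then `ρ^{nρ}` divides `∑_{p ∈ V} σ_u(A_p^{(l)})` for all `l, u ≥ 1`. -/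
theorem stmt_8 (k n : ℕ) (hk : 1 ≤ k) (hn : 1 ≤ n)
    (ρ : Rk k) (hρ0 : ρ ≠ 0) (hρ1 : ρ.IsHomogeneous 1)
    (nρ : ℕ) (hnρ : 1 ≤ nρ)
    (V : Type) [Fintype V] (A : V → Fin n → Rk k)
    (hcell : Cellular ρ nρ A)
    (hdiv : RhoDivisible ρ A) :
    ∀ l u : ℕ, 1 ≤ l → 1 ≤ u →
      ρ ^ nρ ∣ ∑ p : V, esig n u (fun i => A p i ^ l) := by
  classical
  intro l u hl hu
  obtain ⟨hVeven, hAhom, hcnt, hcong⟩ := hcell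
  obtain ⟨hPρ, hdveq⟩ := prime_and_dvd_eq ρ hρ0 hρ1
  by_cases hVempty : IsEmpty V
  · rw [Finset.univ_eq_empty, Finset.sum_empty]
    exact dvd_zero _
  have hVne : Nonempty V := not_isEmpty_iff.mp hVempty
  set N := nρ with hN
  set S : V → Finset (Fin n) := fun p => Finset.univ.filter (fun i => A p i = ρ) with hSdef
  have hScard : ∀ p, (S p).card = N := by
    intro p
    have hc := hcnt p
    rw [cnt, Nat.card_eq_fintype_card, Fintype.card_subtype] at hc
    rw [hSdef, ← hc]
  have hNn : N ≤ n := by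
    obtain ⟨p⟩ := hVne
    calc N = (S p).card := (hScard p).symm
    _ ≤ Fintype.card (Fin n) := Finset.card_le_univ (S p)
    _ = n := Fintype.card_fin n
  set B : V → Rk k := fun p => ∏ i ∈ (S p)ᶜ, A p i with hB
  have hSval : ∀ p, ∀ i ∈ S p, A p i = ρ := by
    intro p i hi
    rw [hSdef] at hi
    exact (Finset.mem_filter.1 hi).2
  have hScval : ∀ p, ∀ i ∈ (S p)ᶜ, A p i ≠ ρ := by
    intro p i hi
    have := Finset.mem_compl.1 hi
    rw [hSdef] at this
    intro hEq
    exact this (Finset.mem_filter.2 ⟨Finset.mem_univ i, hEq⟩)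
  have hnotdvd : ∀ p, ∀ i ∈ (S p)ᶜ, ¬ ρ ∣ A p i := by
    intro p i hi hdd
    exact hScval p i hi (hdveq (A p i) (hAhom p i).2 (hAhom p i).1 hdd)
  have hB0 : ∀ p, B p ≠ 0 := by
    intro p
    rw [hB]
    exact Finset.prod_ne_zero_iff.2 fun i _ => (hAhom p i).1
  have hBnd : ∀ p, ¬ ρ ∣ B p := by
    intro p hdd
    rw [hB] at hdd
    obtain ⟨i, hi, hdq⟩ := hPρ.exists_mem_finset_dvd hdd
    exact hnotdvd p i hi hdq
  have hyp : ∀ p, (∏ i, A p i) = ρ ^ N * B p := by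
    intro p
    rw [hB, ← Finset.prod_mul_prod_compl (S p) (A p)]
    congr 1
    rw [← hScard p, ← Finset.prod_const]
    exact Finset.prod_congr rfl (hSval p)
  have hEsymmEval : ∀ (y : Fin n → Rk k) (t : ℕ),
      MvPolynomial.aeval y (MvPolynomial.esymm (Fin n) (ZMod 2) t) = esig n t y := by
    intro y t
    rw [MvPolynomial.esymm, map_sum]
    unfold esig
    refine Finset.sum_congr rfl fun T _ => ?_
    rw [map_prod]
    exact Finset.prod_congr rfl fun i _ => MvPolynomial.aeval_X _ i
  set Fl : MvPolynomial (Fin n) (ZMod 2) :=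
    MvPolynomial.aeval (fun i => (MvPolynomial.X i : MvPolynomial (Fin n) (ZMod 2)) ^ l)
      (MvPolynomial.esymm (Fin n) (ZMod 2) u) with hFl
  have hFsym : Fl.IsSymmetric := by
    intro e
    have hcomp : (MvPolynomial.rename (⇑e)).comp
          (MvPolynomial.aeval (R := ZMod 2)
            (fun i => (MvPolynomial.X i : MvPolynomial (Fin n) (ZMod 2)) ^ l))
        = (MvPolynomial.aeval
            (fun i => (MvPolynomial.X i : MvPolynomial (Fin n) (ZMod 2)) ^ l)).comp
          (MvPolynomial.rename (⇑e)) := by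
      apply MvPolynomial.algHom_ext
      intro i
      rw [AlgHom.comp_apply, AlgHom.comp_apply, MvPolynomial.aeval_X, MvPolynomial.rename_X,
        MvPolynomial.aeval_X, map_pow, MvPolynomial.rename_X]
    have happ := DFunLike.congr_fun hcomp (MvPolynomial.esymm (Fin n) (ZMod 2) u)
    simp only [AlgHom.coe_comp, Function.comp_apply] at happ
    rw [hFl]
    rw [happ, MvPolynomial.esymm_isSymmetric (Fin n) (ZMod 2) u e]
  have hFeval : ∀ p : V, MvPolynomial.aeval (A p) Fl = esig n u (fun i => A p i ^ l) := by
    intro p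
    rw [hFl, MvPolynomial.comp_aeval_apply]
    have hfun : (fun i => MvPolynomial.aeval (A p) ((MvPolynomial.X i :
        MvPolynomial (Fin n) (ZMod 2)) ^ l)) = fun i => A p i ^ l := by
      funext i
      rw [map_pow, MvPolynomial.aeval_X]
    rw [hfun]
    exact hEsymmEval _ u
  have hconstraint : ∀ f : MvPolynomial (Fin n) (ZMod 2), f.IsSymmetric →
      ρ ^ N ∣ ∑ p : V, MvPolynomial.aeval (A p) f * ∏ q ∈ Finset.univ.erase p, B q := by
    intro f hf
    obtain ⟨h, g, hg, heq⟩ := hdiv f hf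
    refine dvd_sum_mul_of_div_eq ρ hPρ N _ B hB0 h g hg ?_
    rw [← heq]
    refine Finset.sum_congr rfl fun p _ => ?_
    rw [hyp p]
  have hZ : ∀ t : ℕ, ρ ^ N ∣ ∑ p : V,
      MvPolynomial.aeval (A p) Fl * esig n t (A p) * ∏ q ∈ Finset.univ.erase p, B q := by
    intro t
    have hdd := hconstraint (Fl * MvPolynomial.esymm (Fin n) (ZMod 2) t)
      (hFsym.mul (MvPolynomial.esymm_isSymmetric (Fin n) (ZMod 2) t))
    have hrw : ∀ p : V, MvPolynomial.aeval (A p) (Fl * MvPolynomial.esymm (Fin n) (ZMod 2) t)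
        = MvPolynomial.aeval (A p) Fl * esig n t (A p) := by
      intro p
      rw [map_mul, hEsymmEval]
    rwa [Finset.sum_congr rfl (fun p _ => by rw [hrw p])] at hdd
  have hs2N : N ≤ 2 ^ n := le_of_lt (lt_of_le_of_lt hNn (Nat.lt_two_pow_self (n := n)))
  have hs2m : n - N < 2 ^ n := lt_of_le_of_lt (Nat.sub_le n N) (Nat.lt_two_pow_self (n := n))
  have hkeyid : ∀ p : V, ∑ tp ∈ Finset.HasAntidiagonal.antidiagonal (n - N),
      ((2 ^ n - N).choose tp.1 : Rk k) * ρ ^ tp.1 * esig n tp.2 (A p) = B p := by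
    intro p
    rw [hB]
    exact key_identity ρ (A p) (S p) (hSval p) N (hScard p) n hs2N hs2m
  have hTOT : ρ ^ N ∣ ∑ tp ∈ Finset.HasAntidiagonal.antidiagonal (n - N),
      ((2 ^ n - N).choose tp.1 : Rk k) * ρ ^ tp.1 *
        ∑ p : V, MvPolynomial.aeval (A p) Fl * esig n tp.2 (A p)
          * ∏ q ∈ Finset.univ.erase p, B q :=
    Finset.dvd_sum fun tp _ => Dvd.dvd.mul_left (hZ tp.2) _
  have hre : (∑ tp ∈ Finset.HasAntidiagonal.antidiagonal (n - N),
      ((2 ^ n - N).choose tp.1 : Rk k) * ρ ^ tp.1 *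
        ∑ p : V, MvPolynomial.aeval (A p) Fl * esig n tp.2 (A p)
          * ∏ q ∈ Finset.univ.erase p, B q)
      = (∏ q : V, B q) * ∑ p : V, MvPolynomial.aeval (A p) Fl := by
    calc (∑ tp ∈ Finset.HasAntidiagonal.antidiagonal (n - N),
        ((2 ^ n - N).choose tp.1 : Rk k) * ρ ^ tp.1 *
          ∑ p : V, MvPolynomial.aeval (A p) Fl * esig n tp.2 (A p)
            * ∏ q ∈ Finset.univ.erase p, B q)
        = ∑ tp ∈ Finset.HasAntidiagonal.antidiagonal (n - N), ∑ p : V,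
            ((2 ^ n - N).choose tp.1 : Rk k) * ρ ^ tp.1 *
              (MvPolynomial.aeval (A p) Fl * esig n tp.2 (A p)
                * ∏ q ∈ Finset.univ.erase p, B q) :=
          Finset.sum_congr rfl fun tp _ => Finset.mul_sum _ _ _
      _ = ∑ p : V, ∑ tp ∈ Finset.HasAntidiagonal.antidiagonal (n - N),
            ((2 ^ n - N).choose tp.1 : Rk k) * ρ ^ tp.1 *
              (MvPolynomial.aeval (A p) Fl * esig n tp.2 (A p)
                * ∏ q ∈ Finset.univ.erase p, B q) := Finset.sum_comm
      _ = ∑ p : V, (∏ q : V, B q) * MvPolynomial.aeval (A p) Fl := by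
          refine Finset.sum_congr rfl fun p _ => ?_
          have hswap : ∑ tp ∈ Finset.HasAntidiagonal.antidiagonal (n - N),
              ((2 ^ n - N).choose tp.1 : Rk k) * ρ ^ tp.1 *
                (MvPolynomial.aeval (A p) Fl * esig n tp.2 (A p)
                  * ∏ q ∈ Finset.univ.erase p, B q)
              = (MvPolynomial.aeval (A p) Fl * ∏ q ∈ Finset.univ.erase p, B q)
                * ∑ tp ∈ Finset.HasAntidiagonal.antidiagonal (n - N),
                    ((2 ^ n - N).choose tp.1 : Rk k) * ρ ^ tp.1 * esig n tp.2 (A p) := by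
            rw [Finset.mul_sum]
            exact Finset.sum_congr rfl fun tp _ => by ring
          rw [hswap, hkeyid p]
          have hBp : B p * ∏ q ∈ Finset.univ.erase p, B q = ∏ q : V, B q :=
            Finset.mul_prod_erase Finset.univ B (Finset.mem_univ p)
          rw [← hBp]
          ring
      _ = (∏ q : V, B q) * ∑ p : V, MvPolynomial.aeval (A p) Fl :=
          (Finset.mul_sum _ _ _).symm
  rw [hre] at hTOT
  have hBtot : ¬ ρ ∣ ∏ q : V, B q := by
    intro hdd
    obtain ⟨q0, _, hdq⟩ := hPρ.exists_mem_finset_dvd hdd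
    exact hBnd q0 hdq
  have hfinal := hPρ.pow_dvd_of_dvd_mul_left N hBtot hTOT
  rw [Finset.sum_congr rfl (fun p _ => hFeval p)] at hfinal
  exact hfinal

end
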